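/- On ℂP^n, let T = √−1 ∂∂̄ log|ξ_n|² = 2π[ξ_n = 0] be the current of integration along the hyperplane {ξ_n = 0} scaled by 2π, and let q = [1:0:⋯:0]. Then for every 0 < r ≤ π/√2, Θ(T,q,r) = 2π; i.e., Θ(T,q,·) is constant in r. By contrast, the modified quantity Θ̃(T,q,r) := (1/((2π)^{n-1} r^{2n-2})) ∫_{B_{ℂP^n}(q,r)} T ∧ ω_{ℂP^n}^{n-1} equals 2π sin^{2n-2}(r/√2)/r^{2n-2}, which is strictly decreasing in r on (0, π/√2]. -/

import Mathlib

noncomputable section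
open Metric MeasureTheory Real Filter Set Topology

instance EuclideanSpace.instMeasurableSpaceComplex {ι : Type*} :
    MeasurableSpace (EuclideanSpace ℂ ι) := MeasurableSpace.comap WithLp.ofLp MeasurableSpace.pi

instance EuclideanSpace.instBorelSpaceComplex {ι : Type*} [Finite ι] :
    BorelSpace (EuclideanSpace ℂ ι) := PiLp.borelSpace (p := 2) (X := fun _ : ι => ℂ)

/-- Lebesgue measure on `ℂⁿ`, i.e. the Riemannian volume `ω_{ℂⁿ}ⁿ/n!` of the flat
Kähler (Euclidean) metric. -/
noncomputable instance EuclideanSpace.instMeasureSpaceComplex {ι : Type*} [Fintype ι] :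
    MeasureSpace (EuclideanSpace ℂ ι) := ⟨Measure.map (WithLp.toLp 2) (Measure.pi fun _ => (volume : Measure ℂ))⟩

/-- The complex projective space `ℂPⁿ = ℙ(ℂ^{n+1})`. -/
abbrev CPn (n : ℕ) := Projectivization ℂ (EuclideanSpace ℂ (Fin (n + 1)))

/-- The geodesic distance of the Fubini–Study metric `ω_{ℂPⁿ}`, normalised so that
`∫_{ℂPⁿ} ω_{ℂPⁿ}ⁿ = (2π)ⁿ` (equivalently `Ric = (n+1) ω_{ℂPⁿ}`).  With this
normalisation the geodesic distance satisfies
`cos²(d(x,y)/√2) = |⟨ξ,η⟩|²/(|ξ|²|η|²)` for any lifts `ξ, η`, hence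
`d(x,y) = √2 · arccos(|⟨ξ,η⟩|/(|ξ||η|))` and `diam(ℂPⁿ) = π/√2`. -/
noncomputable def fsDist {n : ℕ} (x y : CPn n) : ℝ :=
  Real.sqrt 2 * Real.arccos (‖(inner ℂ x.rep y.rep : ℂ)‖ / (‖x.rep‖ * ‖y.rep‖))

/-- The geodesic ball of radius `r` about `q` in `ℂPⁿ` for the Fubini–Study metric. -/
def fsBall {n : ℕ} (q : CPn n) (r : ℝ) : Set (CPn n) := {x | fsDist q x < r}

instance CPn.instMeasurableSpace {n : ℕ} : MeasurableSpace (CPn n) :=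
  MeasurableSpace.map (Projectivization.mk' ℂ) inferInstance

/-- The Fubini–Study volume measure `ω_{ℂPⁿ}ⁿ/n!` on `ℂPⁿ`, with total mass `(2π)ⁿ/n!`:
it is the unique unitarily invariant measure with this normalisation, obtained by pushing
forward the normalised uniform measure on the unit sphere of `ℂ^{n+1}` (realised here as
the normalised restriction of Lebesgue measure to the unit ball, which projects to the
same measure) under the Hopf projection. -/
noncomputable def fsVol (n : ℕ) : Measure (CPn n) :=
  (ENNReal.ofReal ((2 * π) ^ n / n.factorial) *
      (volume (ball (0 : EuclideanSpace ℂ (Fin (n + 1))) 1))⁻¹) •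
    Measure.map (Projectivization.mk' ℂ)
      ((volume.restrict (ball (0 : EuclideanSpace ℂ (Fin (n + 1))) 1 \ {0})).comap
        Subtype.val)

/-- The linear inclusion `ℂᵐ → ℂ^{m+1}` whose image is the hyperplane `{ξ_m = 0}`
(last coordinate zero). -/
def padLast (m : ℕ) : EuclideanSpace ℂ (Fin m) →ₗ[ℂ] EuclideanSpace ℂ (Fin (m + 1)) where
  toFun v := WithLp.toLp 2 (fun i => Fin.lastCases (0 : ℂ) (fun j => v j) i)
  map_add' x y := by
    ext i
    refine Fin.lastCases ?_ (fun j => ?_) i <;>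
      simp [Fin.lastCases_last, Fin.lastCases_castSucc, PiLp.add_apply]
  map_smul' c x := by
    ext i
    refine Fin.lastCases ?_ (fun j => ?_) i <;>
      simp [Fin.lastCases_last, Fin.lastCases_castSucc, PiLp.smul_apply]

lemma padLast_injective (m : ℕ) : Function.Injective (padLast m) := by
  intro x y h
  ext j
  have := congrFun (congrArg
    (fun (v : EuclideanSpace ℂ (Fin (m + 1))) (i : Fin (m + 1)) => v i) h) (Fin.castSucc j)
  simpa [padLast, Fin.lastCases_castSucc] using this

/-- The inclusion `ℂP^{m} ≅ {ξ_{m+1} = 0} ⊆ ℂP^{m+1}` of the hyperplane at the last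
coordinate; it is a totally geodesic isometric embedding for the Fubini–Study metrics. -/
def hyperplaneIncl (m : ℕ) : CPn m → CPn (m + 1) :=
  Projectivization.map (padLast (m + 1)) (padLast_injective (m + 1))

lemma single_zero_one_ne_zero {m : ℕ} :
    (EuclideanSpace.single (0 : Fin (m + 1)) (1 : ℂ)) ≠ 0 := by
  intro h
  have h0 : EuclideanSpace.single (0 : Fin (m + 1)) (1 : ℂ) 0 = 0 := by rw [h]; rfl
  simp [EuclideanSpace.single_apply] at h0

/-- The point `q = [1:0:⋯:0]`. -/
def northPole (m : ℕ) : CPn m :=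
  Projectivization.mk ℂ (EuclideanSpace.single (0 : Fin (m + 1)) (1 : ℂ))
    single_zero_one_ne_zero

/-- The model current `T = √-1 ∂∂̄ log|ξ_n|² = 2π·[ξ_n = 0]` on `ℂPⁿ` — `2π` times the
current of integration along the hyperplane `H = {ξ_n = 0}` (Poincaré–Lelong).  Its trace
measure `T ∧ ω_{ℂPⁿ}^{n-1}` is `2π` times the Fubini–Study volume form `ω^{n-1}` of
`H ≅ ℂP^{n-1}` (restriction of `ω_{ℂPⁿ}` to `H` is `ω_{ℂP^{n-1}}`), i.e.
`2π·(n-1)!` times the pushforward of `fsVol (n-1)` under the inclusion `H ⊆ ℂPⁿ`.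
Here we write `n = m + 1`. -/
noncomputable def modelCurrentTrace (m : ℕ) : Measure (CPn (m + 1)) :=
  (ENNReal.ofReal (2 * π * m.factorial)) • Measure.map (hyperplaneIncl m) (fsVol m)


open scoped ENNReal

instance haarECn (k : ℕ) : (volume : Measure (EuclideanSpace ℂ (Fin k))).IsAddHaarMeasure :=
  (EuclideanSpace.equiv (Fin k) ℂ).symm.isAddHaarMeasure_map (Measure.pi fun _ => (volume : Measure ℂ))

lemma finrank_ECn (k : ℕ) : Module.finrank ℝ (EuclideanSpace ℂ (Fin k)) = 2 * k := by
  rw [← Module.finrank_mul_finrank ℝ ℂ (EuclideanSpace ℂ (Fin k)), Complex.finrank_real_complex,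
    finrank_euclideanSpace, Fintype.card_fin]

lemma annulus_vol (l u : ℝ) (hl : 0 ≤ l) :
    volume {z : ℂ | l < ‖z‖ ^ 2 ∧ ‖z‖ ^ 2 < u} = ENNReal.ofReal (π * (u - l)) := by
  rcases le_or_gt u l with h | h
  · have : {z : ℂ | l < ‖z‖ ^ 2 ∧ ‖z‖ ^ 2 < u} = ∅ := by
      ext z; simp only [mem_setOf_eq, mem_empty_iff_false, iff_false, not_and, not_lt]
      intro h1; linarith
    rw [this, measure_empty, eq_comm, ENNReal.ofReal_eq_zero]
    nlinarith [pi_pos]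
  · have hu : 0 < u := lt_of_le_of_lt hl h
    have hset : {z : ℂ | l < ‖z‖ ^ 2 ∧ ‖z‖ ^ 2 < u}
        = ball (0 : ℂ) (Real.sqrt u) \ closedBall (0 : ℂ) (Real.sqrt l) := by
      ext z
      simp only [mem_setOf_eq, mem_diff, mem_ball_zero_iff, mem_closedBall_zero_iff, not_le]
      constructor
      · rintro ⟨h1, h2⟩
        exact ⟨(Real.lt_sqrt (norm_nonneg z)).2 h2, (Real.sqrt_lt' (by nlinarith [norm_nonneg z])).2 h1⟩
      · rintro ⟨h1, h2⟩
        exact ⟨by nlinarith [Real.sq_sqrt hl, Real.sqrt_nonneg l, norm_nonneg z],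
          by nlinarith [Real.sq_sqrt hu.le, Real.sqrt_nonneg u, norm_nonneg z]⟩
    rw [hset, measure_diff (closedBall_subset_ball (Real.sqrt_lt_sqrt hl h))
      measurableSet_closedBall.nullMeasurableSet
      (by rw [Complex.volume_closedBall]; exact ENNReal.mul_ne_top (by simp) (by simp)),
      Complex.volume_ball, Complex.volume_closedBall]
    rw [← ENNReal.ofReal_pow (Real.sqrt_nonneg u), ← ENNReal.ofReal_pow (Real.sqrt_nonneg l),
      Real.sq_sqrt hu.le, Real.sq_sqrt hl]
    rw [show ((NNReal.pi : ℝ≥0∞)) = ENNReal.ofReal π by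
      rw [← ENNReal.ofReal_coe_nnreal]; rw [NNReal.coe_real_pi]]
    rw [← ENNReal.ofReal_mul hu.le, ← ENNReal.ofReal_mul hl, ← ENNReal.ofReal_sub _ (by positivity)]
    ring_nf

lemma measurable_apply0 {k : ℕ} : Measurable (fun v : EuclideanSpace ℂ (Fin (k+1)) => v 0) :=
  (measurable_pi_apply 0).comp (comap_measurable _)

lemma coneSet_measurable {k : ℕ} (c : ℝ) :
    MeasurableSet {v : EuclideanSpace ℂ (Fin (k+1)) | ‖v‖ < 1 ∧ c * ‖v‖ < ‖v 0‖} := by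
  refine MeasurableSet.inter ?_ ?_
  · exact measurableSet_lt (measurable_norm) measurable_const
  · exact measurableSet_lt (measurable_const.mul measurable_norm) measurable_apply0.norm

lemma insertNth_cond {k : ℕ} {c : ℝ} (hc : 0 ≤ c) (z : ℂ) (w : EuclideanSpace ℂ (Fin k)) :
    ((WithLp.toLp 2 (Fin.insertNth (α := fun _ => ℂ) 0 z w) : EuclideanSpace ℂ (Fin (k+1))) ∈
      {v : EuclideanSpace ℂ (Fin (k+1)) | ‖v‖ < 1 ∧ c * ‖v‖ < ‖v 0‖}) ↔
      (‖z‖ ^ 2 + ‖w‖ ^ 2 < 1 ∧ c ^ 2 * (‖z‖ ^ 2 + ‖w‖ ^ 2) < ‖z‖ ^ 2) := by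
  set v : EuclideanSpace ℂ (Fin (k+1)) := WithLp.toLp 2 (Fin.insertNth (α := fun _ => ℂ) 0 z w) with hv
  have hv0 : v 0 = z := Fin.insertNth_apply_same (α := fun _ => ℂ) 0 z w
  have hQ : ‖v‖ ^ 2 = ‖z‖ ^ 2 + ‖w‖ ^ 2 := by
    rw [EuclideanSpace.norm_eq v, Real.sq_sqrt (by positivity), EuclideanSpace.norm_eq w,
      Real.sq_sqrt (by positivity), Fin.sum_univ_succAbove _ 0]
    simp only [hv, WithLp.ofLp_toLp, Fin.insertNth_apply_same, Fin.insertNth_apply_succAbove]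
  have h1 : ‖v‖ < 1 ↔ ‖v‖ ^ 2 < 1 :=
    ⟨fun h => by nlinarith [norm_nonneg v], fun h => by nlinarith [norm_nonneg v]⟩
  have h2 : c * ‖v‖ < ‖v 0‖ ↔ c ^ 2 * ‖v‖ ^ 2 < ‖v 0‖ ^ 2 := by
    constructor
    · intro h; nlinarith [norm_nonneg (v 0), mul_nonneg hc (norm_nonneg v)]
    · intro h; nlinarith [norm_nonneg (v 0), mul_nonneg hc (norm_nonneg v)]
  show (‖v‖ < 1 ∧ c * ‖v‖ < ‖v 0‖) ↔ _
  rw [h1, h2, hQ, hv0]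

lemma cone_to_integral {k : ℕ} {c s : ℝ} (hc : 0 ≤ c) (hs : 0 < s) (hcs : c ^ 2 + s ^ 2 = 1) :
    volume {v : EuclideanSpace ℂ (Fin (k+1)) | ‖v‖ < 1 ∧ c * ‖v‖ < ‖v 0‖}
      = ∫⁻ w : EuclideanSpace ℂ (Fin k), ENNReal.ofReal (π * (1 - ‖w‖ ^ 2 / s ^ 2)) := by
  set S := {v : EuclideanSpace ℂ (Fin (k+1)) | ‖v‖ < 1 ∧ c * ‖v‖ < ‖v 0‖} with hS
  set e := MeasurableEquiv.piFinSuccAbove (fun _ : Fin (k+1) => ℂ) 0 with he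
  have hprod : MeasurePreserving (⇑e) (Measure.pi fun _ => (volume : Measure ℂ))
      ((volume : Measure ℂ).prod (Measure.pi fun _ : Fin k => (volume : Measure ℂ))) :=
    measurePreserving_piFinSuccAbove (fun _ => (volume : Measure ℂ)) 0
  have hSm : MeasurableSet S := coneSet_measurable c
  have hS' : MeasurableSet (WithLp.toLp 2 ⁻¹' S) := (WithLp.measurable_toLp 2 _) hSm
  have hA : MeasurableSet (⇑e.symm ⁻¹' (WithLp.toLp 2 ⁻¹' S)) := e.symm.measurable hS'
  have h0 : volume S = ((volume : Measure ℂ).prod (Measure.pi fun _ : Fin k => (volume : Measure ℂ)))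
      (⇑e.symm ⁻¹' (WithLp.toLp 2 ⁻¹' S)) := by
    rw [show (volume : Measure (EuclideanSpace ℂ (Fin (k+1))))
        = Measure.map (WithLp.toLp 2) (Measure.pi fun _ => (volume : Measure ℂ)) from rfl,
      Measure.map_apply (WithLp.measurable_toLp 2 _) hSm]
    have h := hprod.measure_preimage (s := ⇑e.symm ⁻¹' (WithLp.toLp 2 ⁻¹' S)) hA.nullMeasurableSet
    rw [show ⇑e ⁻¹' (⇑e.symm ⁻¹' (WithLp.toLp 2 ⁻¹' S)) = WithLp.toLp 2 ⁻¹' S by ext v; simp] at h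
    exact h
  rw [h0]
  rw [Measure.prod_apply_symm hA]
  show _ = ∫⁻ w, ENNReal.ofReal (π * (1 - ‖w‖ ^ 2 / s ^ 2))
    ∂(Measure.map (MeasurableEquiv.toLp 2 (Fin k → ℂ)) (Measure.pi fun _ => (volume : Measure ℂ)))
  rw [lintegral_map_equiv]
  refine lintegral_congr fun w0 => ?_
  obtain ⟨w, rfl⟩ : ∃ w : EuclideanSpace ℂ (Fin k), w.ofLp = w0 := ⟨WithLp.toLp 2 w0, rfl⟩
  rw [MeasurableEquiv.toLp_apply, WithLp.toLp_ofLp]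
  have hslice : ((fun z : ℂ => (z, w.ofLp)) ⁻¹' (⇑e.symm ⁻¹' (WithLp.toLp 2 ⁻¹' S)))
      = {z : ℂ | c^2 * ‖w‖^2 / s^2 < ‖z‖ ^ 2 ∧ ‖z‖ ^ 2 < 1 - ‖w‖ ^ 2} := by
    ext z
    have hes : e.symm (z, w.ofLp) = (Fin.insertNth (α := fun _ => ℂ) 0 z w.ofLp) := by
      rfl
    simp only [mem_preimage, hes, mem_setOf_eq]
    rw [insertNth_cond hc z w]
    have hs2 : (0:ℝ) < s ^ 2 := by positivity
    constructor
    · rintro ⟨h1, h2⟩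
      constructor
      · rw [div_lt_iff₀ hs2]; nlinarith
      · linarith
    · rintro ⟨h1, h2⟩
      rw [div_lt_iff₀ hs2] at h1
      exact ⟨by linarith, by nlinarith⟩
  rw [hslice, annulus_vol _ _ (by positivity)]
  congr 1
  have : (1 - ‖w‖^2) - c^2*‖w‖^2/s^2 = 1 - ‖w‖^2/s^2 := by
    field_simp
    nlinarith [sq_nonneg (‖w‖)]
  rw [this]

lemma integral_scale {k : ℕ} {s : ℝ} (hs : 0 < s) :
    ∫⁻ w : EuclideanSpace ℂ (Fin k), ENNReal.ofReal (π * (1 - ‖w‖ ^ 2 / s ^ 2))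
      = ENNReal.ofReal (s ^ (2 * k)) *
        ∫⁻ w : EuclideanSpace ℂ (Fin k), ENNReal.ofReal (π * (1 - ‖w‖ ^ 2)) := by
  set g : EuclideanSpace ℂ (Fin k) → ℝ≥0∞ := fun u => ENNReal.ofReal (π * (1 - ‖u‖ ^ 2)) with hg
  have hgm : Measurable g := by
    apply ENNReal.measurable_ofReal.comp
    exact (measurable_const.mul ((measurable_const.sub ((measurable_norm).pow_const 2))))
  have key : ∀ w : EuclideanSpace ℂ (Fin k), g (s⁻¹ • w) = ENNReal.ofReal (π * (1 - ‖w‖ ^ 2 / s ^ 2)) := by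
    intro w
    have : ‖s⁻¹ • w‖ ^ 2 = ‖w‖ ^ 2 / s ^ 2 := by
      rw [norm_smul]
      simp [Real.norm_eq_abs, abs_of_pos (inv_pos.2 hs), mul_pow, inv_pow]
      ring
    simp only [hg, this]
  calc ∫⁻ w : EuclideanSpace ℂ (Fin k), ENNReal.ofReal (π * (1 - ‖w‖ ^ 2 / s ^ 2))
      = ∫⁻ w, g (s⁻¹ • w) := by exact lintegral_congr fun w => (key w).symm
    _ = ∫⁻ u, g u ∂(Measure.map (s⁻¹ • ·) volume) :=
        (lintegral_map hgm (measurable_const_smul _)).symm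
    _ = ENNReal.ofReal (s ^ (2 * k)) * ∫⁻ u, g u := by
        rw [Measure.map_addHaar_smul volume (inv_ne_zero hs.ne'), lintegral_smul_measure]
        congr 2
        rw [finrank_ECn, inv_pow, inv_inv, abs_of_pos (by positivity)]

def coordZeroLM (k : ℕ) : EuclideanSpace ℂ (Fin (k+1)) →ₗ[ℝ] ℂ where
  toFun v := v 0
  map_add' x y := rfl
  map_smul' c x := rfl

lemma cone_volume {k : ℕ} {c s : ℝ} (hc : 0 ≤ c) (hs : 0 < s) (hcs : c ^ 2 + s ^ 2 = 1) :
    volume {v : EuclideanSpace ℂ (Fin (k+1)) | ‖v‖ < 1 ∧ c * ‖v‖ < ‖v 0‖}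
      = ENNReal.ofReal (s ^ (2 * k)) *
          volume (ball (0 : EuclideanSpace ℂ (Fin (k+1))) 1) := by
  have hball : volume (ball (0 : EuclideanSpace ℂ (Fin (k+1))) 1)
      = volume {v : EuclideanSpace ℂ (Fin (k+1)) | ‖v‖ < 1 ∧ (0:ℝ) * ‖v‖ < ‖v 0‖} := by
    have hset : {v : EuclideanSpace ℂ (Fin (k+1)) | ‖v‖ < 1 ∧ (0:ℝ) * ‖v‖ < ‖v 0‖}
        = ball (0 : EuclideanSpace ℂ (Fin (k+1))) 1 \ ↑(LinearMap.ker (coordZeroLM k)) := by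
      ext v
      simp only [mem_setOf_eq, mem_diff, mem_ball_zero_iff, SetLike.mem_coe,
        LinearMap.mem_ker, zero_mul]
      constructor
      · rintro ⟨h1, h2⟩
        refine ⟨h1, fun h => ?_⟩
        rw [show (coordZeroLM k) v = v 0 from rfl] at h
        rw [h] at h2; simp at h2
      · rintro ⟨h1, h2⟩
        refine ⟨h1, ?_⟩
        have : v 0 ≠ 0 := h2
        simpa [norm_pos_iff] using this
    rw [hset, measure_diff_null]
    apply Measure.addHaar_submodule
    intro h
    have : EuclideanSpace.single (0 : Fin (k+1)) (1:ℂ) ∈ LinearMap.ker (coordZeroLM k) := by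
      rw [h]; trivial
    rw [LinearMap.mem_ker] at this
    rw [show (coordZeroLM k) (EuclideanSpace.single (0 : Fin (k+1)) (1:ℂ))
      = EuclideanSpace.single (0 : Fin (k+1)) (1:ℂ) 0 from rfl] at this
    simp [EuclideanSpace.single_apply] at this
  rw [cone_to_integral hc hs hcs, integral_scale hs, hball,
    cone_to_integral (le_refl (0:ℝ)) one_pos (by norm_num), integral_scale one_pos]
  simp

-- projectivization lemmas
lemma fsDist_mk {n : ℕ} (u v : EuclideanSpace ℂ (Fin (n+1))) (hu : u ≠ 0) (hv : v ≠ 0) :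
    fsDist (Projectivization.mk ℂ u hu) (Projectivization.mk ℂ v hv)
      = Real.sqrt 2 * Real.arccos (‖(inner ℂ u v : ℂ)‖ / (‖u‖ * ‖v‖)) := by
  obtain ⟨a, ha⟩ := (Projectivization.mk_eq_mk_iff ℂ _ _ _ hu).1
    (Projectivization.mk_rep (Projectivization.mk ℂ u hu))
  obtain ⟨b, hb⟩ := (Projectivization.mk_eq_mk_iff ℂ _ _ _ hv).1
    (Projectivization.mk_rep (Projectivization.mk ℂ v hv))
  unfold fsDist
  rw [← ha, ← hb]
  congr 1
  rw [Units.smul_def, Units.smul_def, inner_smul_left, inner_smul_right, norm_smul, norm_smul]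
  rw [norm_mul, norm_mul, RCLike.norm_conj]
  have ha' : ‖(a : ℂ)‖ ≠ 0 := by simp [Units.ne_zero]
  have hb' : ‖(b : ℂ)‖ ≠ 0 := by simp [Units.ne_zero]
  have hu' : ‖u‖ ≠ 0 := norm_ne_zero_iff.2 hu
  have hv' : ‖v‖ ≠ 0 := norm_ne_zero_iff.2 hv
  congr 1
  field_simp

lemma fsDist_northPole_mk {n : ℕ} (v : EuclideanSpace ℂ (Fin (n+1))) (hv : v ≠ 0) :
    fsDist (northPole n) (Projectivization.mk ℂ v hv)
      = Real.sqrt 2 * Real.arccos (‖v 0‖ / ‖v‖) := by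
  unfold northPole
  rw [fsDist_mk _ _ _ hv, EuclideanSpace.inner_single_left, EuclideanSpace.norm_single]
  simp

lemma coord_le_norm {n : ℕ} (v : EuclideanSpace ℂ (Fin (n+1))) (i : Fin (n+1)) :
    ‖v i‖ ≤ ‖v‖ := by
  rw [EuclideanSpace.norm_eq]
  apply Real.le_sqrt_of_sq_le
  exact Finset.single_le_sum (f := fun j => ‖v j‖^2) (fun j _ => by positivity)
    (Finset.mem_univ i)

lemma mk'_measurable {n : ℕ} : Measurable (Projectivization.mk' ℂ :
    {v : EuclideanSpace ℂ (Fin (n+1)) // v ≠ 0} → CPn n) := fun _ h => h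

lemma fsBall_measurable {n : ℕ} (r : ℝ) :
    MeasurableSet (fsBall (northPole n) r) := by
  show MeasurableSet ((Projectivization.mk' ℂ) ⁻¹' (fsBall (northPole n) r))
  have : (Projectivization.mk' ℂ) ⁻¹' (fsBall (northPole n) r)
      = {ξ : {v : EuclideanSpace ℂ (Fin (n+1)) // v ≠ 0} |
          Real.sqrt 2 * Real.arccos (‖ξ.1 0‖ / ‖ξ.1‖) < r} := by
    ext ξ
    simp only [mem_preimage, fsBall, mem_setOf_eq, Projectivization.mk'_eq_mk,
      fsDist_northPole_mk ξ.1 ξ.2]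
  rw [this]
  apply measurableSet_lt _ measurable_const
  apply Measurable.const_mul
  apply Real.continuous_arccos.measurable.comp
  apply Measurable.div
  · exact (((measurable_pi_apply 0).comp (comap_measurable _)).comp measurable_subtype_coe).norm
  · exact measurable_subtype_coe.norm

lemma sqrt_two_pos : (0:ℝ) < Real.sqrt 2 := by positivity

lemma ball_cond_iff {n : ℕ} {r : ℝ} (hr : r ∈ Set.Ioc (0:ℝ) (π / Real.sqrt 2))
    (v : EuclideanSpace ℂ (Fin (n+1))) (hv : v ≠ 0) :
    Real.sqrt 2 * Real.arccos (‖v 0‖ / ‖v‖) < r ↔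
      Real.cos (r / Real.sqrt 2) * ‖v‖ < ‖v 0‖ := by
  have hvpos : 0 < ‖v‖ := norm_pos_iff.2 hv
  have hx0 : 0 ≤ ‖v 0‖ / ‖v‖ := by positivity
  have hx1 : ‖v 0‖ / ‖v‖ ≤ 1 := div_le_one_of_le₀ (coord_le_norm v 0) (norm_nonneg v)
  have ht2 : r / Real.sqrt 2 ≤ π / 2 := by
    have h2 : π / Real.sqrt 2 / Real.sqrt 2 = π / 2 := by
      rw [div_div, Real.mul_self_sqrt (by norm_num)]
    calc r / Real.sqrt 2 ≤ π / Real.sqrt 2 / Real.sqrt 2 :=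
          (div_le_div_iff_of_pos_right sqrt_two_pos).2 hr.2
      _ = π / 2 := h2
  have ht0 : 0 < r / Real.sqrt 2 := div_pos hr.1 sqrt_two_pos
  have hmem1 : Real.arccos (‖v 0‖ / ‖v‖) ∈ Icc 0 π :=
    ⟨Real.arccos_nonneg _, Real.arccos_le_pi _⟩
  have hmem2 : r / Real.sqrt 2 ∈ Icc 0 π := ⟨ht0.le, by linarith [pi_pos]⟩
  rw [mul_comm, ← lt_div_iff₀ sqrt_two_pos]
  rw [show (Real.arccos (‖v 0‖ / ‖v‖) < r / Real.sqrt 2 ↔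
      Real.cos (r / Real.sqrt 2) < Real.cos (Real.arccos (‖v 0‖ / ‖v‖))) from
    (Real.strictAntiOn_cos.lt_iff_gt hmem2 hmem1).symm]
  rw [Real.cos_arccos (by linarith) hx1]
  exact lt_div_iff₀ hvpos


lemma ballDiff_measurable {n : ℕ} :
    MeasurableSet (ball (0 : EuclideanSpace ℂ (Fin (n+1))) 1 \ {0}) :=
  measurableSet_ball.diff (measurableSet_singleton 0)

lemma fsVol_ball (m : ℕ) {r : ℝ} (hr : r ∈ Set.Ioc (0:ℝ) (π / Real.sqrt 2)) :
    fsVol m (fsBall (northPole m) r)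
      = ENNReal.ofReal ((2*π)^m * Real.sin (r / Real.sqrt 2) ^ (2*m) / m.factorial) := by
  set t := r / Real.sqrt 2 with htdef
  have ht0 : 0 < t := div_pos hr.1 sqrt_two_pos
  have htle : t ≤ π / 2 := by
    rw [htdef, show π/2 = π / Real.sqrt 2 / Real.sqrt 2 by
      rw [div_div, Real.mul_self_sqrt (by norm_num)]]
    exact (div_le_div_iff_of_pos_right sqrt_two_pos).2 hr.2
  have hc : 0 ≤ Real.cos t := Real.cos_nonneg_of_mem_Icc ⟨by linarith, htle⟩
  have hs : 0 < Real.sin t :=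
    Real.sin_pos_of_pos_of_lt_pi ht0 (lt_of_le_of_lt htle (by linarith [pi_pos]))
  have hcs : Real.cos t ^ 2 + Real.sin t ^ 2 = 1 := by
    rw [add_comm]; exact Real.sin_sq_add_cos_sq t
  have hsetEq : (Subtype.val '' ((Projectivization.mk' ℂ) ⁻¹' fsBall (northPole m) r)) ∩
        (ball (0 : EuclideanSpace ℂ (Fin (m+1))) 1 \ {0})
      = {v : EuclideanSpace ℂ (Fin (m+1)) | ‖v‖ < 1 ∧ Real.cos t * ‖v‖ < ‖v 0‖} := by
    ext v
    simp only [mem_inter_iff, mem_image, mem_preimage, mem_diff, mem_ball_zero_iff,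
      mem_singleton_iff, mem_setOf_eq]
    constructor
    · rintro ⟨⟨⟨w, hw⟩, hmem, rfl⟩, h1, h2⟩
      refine ⟨h1, ?_⟩
      rw [fsBall, mem_setOf_eq, Projectivization.mk'_eq_mk,
        fsDist_northPole_mk w hw, ball_cond_iff hr w hw] at hmem
      exact hmem
    · rintro ⟨h1, h2⟩
      have hv0 : v ≠ 0 := by
        intro h
        rw [h] at h2
        simp at h2
      refine ⟨⟨⟨v, hv0⟩, ?_, rfl⟩, h1, hv0⟩
      rw [fsBall, mem_setOf_eq, Projectivization.mk'_eq_mk,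
        fsDist_northPole_mk v hv0, ball_cond_iff hr v hv0]
      exact h2
  have hB0 : volume (ball (0 : EuclideanSpace ℂ (Fin (m+1))) 1) ≠ 0 :=
    (measure_ball_pos volume 0 one_pos).ne'
  have hBtop : volume (ball (0 : EuclideanSpace ℂ (Fin (m+1))) 1) ≠ ⊤ :=
    measure_ball_lt_top.ne
  have hemb : MeasurableEmbedding
      (Subtype.val : {v : EuclideanSpace ℂ (Fin (m+1)) // v ≠ 0} → EuclideanSpace ℂ (Fin (m+1))) :=
    MeasurableEmbedding.subtype_coe
      ((measurableSet_singleton (0 : EuclideanSpace ℂ (Fin (m+1)))).compl)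
  rw [fsVol, Measure.smul_apply, Measure.map_apply mk'_measurable (fsBall_measurable r),
    hemb.comap_apply, Measure.restrict_apply' ballDiff_measurable, hsetEq, cone_volume hc hs hcs]
  rw [smul_eq_mul]
  calc ENNReal.ofReal ((2*π)^m / m.factorial) *
        (volume (ball (0 : EuclideanSpace ℂ (Fin (m+1))) 1))⁻¹ *
        (ENNReal.ofReal (Real.sin t ^ (2*m)) *
          volume (ball (0 : EuclideanSpace ℂ (Fin (m+1))) 1))
      = ENNReal.ofReal ((2*π)^m / m.factorial) * ENNReal.ofReal (Real.sin t ^ (2*m)) *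
          ((volume (ball (0 : EuclideanSpace ℂ (Fin (m+1))) 1))⁻¹ *
            volume (ball (0 : EuclideanSpace ℂ (Fin (m+1))) 1)) := by ring
    _ = ENNReal.ofReal ((2*π)^m / m.factorial) * ENNReal.ofReal (Real.sin t ^ (2*m)) := by
        rw [ENNReal.inv_mul_cancel hB0 hBtop, mul_one]
    _ = ENNReal.ofReal ((2*π)^m * Real.sin t ^ (2*m) / m.factorial) := by
        rw [← ENNReal.ofReal_mul (by positivity)]
        congr 1
        ring

lemma padLast_apply_zero {m : ℕ} (w : EuclideanSpace ℂ (Fin (m+1))) :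
    (padLast (m+1) w) 0 = w 0 := by
  show Fin.lastCases (motive := fun _ => ℂ) (0:ℂ) (fun j => w j) (0 : Fin (m+2)) = w 0
  rw [← Fin.castSucc_zero, Fin.lastCases_castSucc]

lemma padLast_norm {m : ℕ} (w : EuclideanSpace ℂ (Fin (m+1))) :
    ‖padLast (m+1) w‖ = ‖w‖ := by
  rw [EuclideanSpace.norm_eq, EuclideanSpace.norm_eq]
  congr 1
  rw [Fin.sum_univ_castSucc]
  have h1 : ∀ j : Fin (m+1), (padLast (m+1) w) (Fin.castSucc j) = w j := by
    intro j
    show Fin.lastCases (motive := fun _ => ℂ) (0:ℂ) (fun j => w j) (Fin.castSucc j) = w j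
    rw [Fin.lastCases_castSucc]
  have h2 : (padLast (m+1) w) (Fin.last (m+1)) = 0 := by
    show Fin.lastCases (motive := fun _ => ℂ) (0:ℂ) (fun j => w j) (Fin.last (m+1)) = 0
    rw [Fin.lastCases_last]
  simp only [h1, h2]
  simp

lemma hyperplaneIncl_measurable (m : ℕ) : Measurable (hyperplaneIncl m) := by
  intro s hs
  show MeasurableSet ((Projectivization.mk' ℂ) ⁻¹' ((hyperplaneIncl m) ⁻¹' s))
  have hne : ∀ ξ : {v : EuclideanSpace ℂ (Fin (m+1)) // v ≠ 0},
      padLast (m+1) ξ.1 ≠ 0 := fun ξ h =>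
    ξ.2 (padLast_injective (m+1) (h.trans (map_zero (padLast (m+1))).symm))
  have hset : (Projectivization.mk' ℂ) ⁻¹' ((hyperplaneIncl m) ⁻¹' s)
      = (fun ξ : {v : EuclideanSpace ℂ (Fin (m+1)) // v ≠ 0} =>
          (⟨padLast (m+1) ξ.1, hne ξ⟩ : {v : EuclideanSpace ℂ (Fin (m+1+1)) // v ≠ 0}))
        ⁻¹' ((Projectivization.mk' ℂ) ⁻¹' s) := by
    ext ξ
    simp only [mem_preimage, Projectivization.mk'_eq_mk]
    rw [hyperplaneIncl, Projectivization.map_mk]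
  rw [hset]
  have hg : Measurable (fun ξ : {v : EuclideanSpace ℂ (Fin (m+1)) // v ≠ 0} =>
      (⟨padLast (m+1) ξ.1, hne ξ⟩ : {v : EuclideanSpace ℂ (Fin (m+1+1)) // v ≠ 0})) := by
    apply Measurable.subtype_mk
    have hpm : Measurable (fun v : EuclideanSpace ℂ (Fin (m+1)) => padLast (m+1) v) := by
      show Measurable (fun v : EuclideanSpace ℂ (Fin (m+1)) =>
        WithLp.toLp 2 (fun i => Fin.lastCases (motive := fun _ => ℂ) (0 : ℂ) (fun j => v j) i))
      apply (WithLp.measurable_toLp 2 _).comp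
      apply measurable_pi_lambda
      intro i
      refine Fin.lastCases ?_ (fun j => ?_) i
      · simp only [Fin.lastCases_last]
        exact measurable_const
      · simp only [Fin.lastCases_castSucc]
        exact (measurable_pi_apply j).comp (comap_measurable _)
    exact hpm.comp measurable_subtype_coe
  exact hg hs

lemma hyperplane_preimage (m : ℕ) (r : ℝ) :
    (hyperplaneIncl m) ⁻¹' (fsBall (northPole (m+1)) r) = fsBall (northPole m) r := by
  ext x
  have h1 : fsDist (northPole (m+1)) (hyperplaneIncl m x) = fsDist (northPole m) x := by
    have hrep := Projectivization.rep_nonzero x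
    conv_lhs => rw [← Projectivization.mk_rep x]
    rw [hyperplaneIncl, Projectivization.map_mk, fsDist_northPole_mk _ _,
      padLast_apply_zero, padLast_norm]
    conv_rhs => rw [← Projectivization.mk_rep x]
    rw [fsDist_northPole_mk]
  simp only [fsBall, mem_preimage, mem_setOf_eq, h1]

lemma modelTrace_ball (m : ℕ) {r : ℝ} (hr : r ∈ Set.Ioc (0:ℝ) (π / Real.sqrt 2)) :
    modelCurrentTrace m (fsBall (northPole (m+1)) r)
      = ENNReal.ofReal (2 * π * (2*π)^m * Real.sin (r / Real.sqrt 2) ^ (2*m)) := by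
  rw [modelCurrentTrace, Measure.smul_apply,
    Measure.map_apply (hyperplaneIncl_measurable m) (fsBall_measurable r),
    hyperplane_preimage, fsVol_ball m hr, smul_eq_mul,
    ← ENNReal.ofReal_mul (by positivity)]
  congr 1
  have hfac : (m.factorial : ℝ) ≠ 0 := Nat.cast_ne_zero.2 m.factorial_ne_zero
  field_simp

lemma div_sqrt2_le {r : ℝ} (h : r ≤ π / Real.sqrt 2) : r / Real.sqrt 2 ≤ π / 2 := by
  rw [show π/2 = π / Real.sqrt 2 / Real.sqrt 2 by
    rw [div_div, Real.mul_self_sqrt (by norm_num)]]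
  exact (div_le_div_iff_of_pos_right sqrt_two_pos).2 h

lemma sin_div_lt {α β : ℝ} (h0 : 0 < α) (hab : α < β) (hb : β ≤ π/2) :
    Real.sin β / β < Real.sin α / α := by
  have hbpos : 0 < β := h0.trans hab
  have hbπ : β ≤ π := by linarith [pi_pos]
  have hcc := strictConcaveOn_sin_Icc
  have hkey := hcc.2 (show (0:ℝ) ∈ Icc 0 π from ⟨le_refl 0, pi_pos.le⟩)
      (show β ∈ Icc 0 π from ⟨hbpos.le, hbπ⟩) hbpos.ne
      (sub_pos.2 ((div_lt_one hbpos).2 hab)) (show (0:ℝ) < α/β by positivity) (by ring)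
  simp only [smul_eq_mul, mul_zero, Real.sin_zero, zero_add] at hkey
  rw [div_mul_cancel₀ _ hbpos.ne'] at hkey
  rw [div_lt_div_iff₀ hbpos h0]
  have h3 := mul_lt_mul_of_pos_right hkey hbpos
  have h4 : α / β * Real.sin β * β = Real.sin β * α := by field_simp
  rw [h4] at h3
  linarith

/-- **the model case.** On `ℂPⁿ` (`n = m+1 ≥ 2`), let
`T = √-1 ∂∂̄ log|ξ_n|² = 2π[ξ_n = 0]` and `q = [1:0:⋯:0]`.  Then for every
`0 < r ≤ π/√2`,
`Θ(T,q,r) = ((2π)^{n-1} sin^{2n-2}(r/√2))⁻¹ ∫_{B(q,r)} T ∧ ω^{n-1} = 2π`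
is constant in `r`; by contrast the modified quantity
`Θ̃(T,q,r) = ((2π)^{n-1} r^{2n-2})⁻¹ ∫_{B(q,r)} T ∧ ω^{n-1}`
equals `2π sin^{2n-2}(r/√2)/r^{2n-2}`, which is strictly decreasing on `(0, π/√2]`. -/
theorem model_current_theta_const_and_tilde_strictAnti (m : ℕ) (hm : 1 ≤ m) :
    (∀ r ∈ Set.Ioc (0 : ℝ) (π / Real.sqrt 2),
      (modelCurrentTrace m (fsBall (northPole (m + 1)) r)).toReal
          / ((2 * π) ^ m * Real.sin (r / Real.sqrt 2) ^ (2 * m)) = 2 * π) ∧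
    (∀ r ∈ Set.Ioc (0 : ℝ) (π / Real.sqrt 2),
      (modelCurrentTrace m (fsBall (northPole (m + 1)) r)).toReal
          / ((2 * π) ^ m * r ^ (2 * m))
        = 2 * π * (Real.sin (r / Real.sqrt 2) ^ (2 * m) / r ^ (2 * m))) ∧
    StrictAntiOn
      (fun r : ℝ => (modelCurrentTrace m (fsBall (northPole (m + 1)) r)).toReal
          / ((2 * π) ^ m * r ^ (2 * m)))
      (Set.Ioc (0 : ℝ) (π / Real.sqrt 2)) := by
  have hmain : ∀ r ∈ Set.Ioc (0:ℝ) (π / Real.sqrt 2),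
      (modelCurrentTrace m (fsBall (northPole (m+1)) r)).toReal
        = 2 * π * (2*π)^m * Real.sin (r / Real.sqrt 2) ^ (2*m) := by
    intro r hr
    rw [modelTrace_ball m hr, ENNReal.toReal_ofReal
      (mul_nonneg (by positivity) ((even_two_mul m).pow_nonneg _))]
  have hsin : ∀ r ∈ Set.Ioc (0:ℝ) (π / Real.sqrt 2), 0 < Real.sin (r / Real.sqrt 2) := by
    intro r hr
    exact Real.sin_pos_of_pos_of_lt_pi (div_pos hr.1 sqrt_two_pos)
      (lt_of_le_of_lt (div_sqrt2_le hr.2) (by linarith [pi_pos]))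
  have part2 : ∀ r ∈ Set.Ioc (0 : ℝ) (π / Real.sqrt 2),
      (modelCurrentTrace m (fsBall (northPole (m + 1)) r)).toReal
          / ((2 * π) ^ m * r ^ (2 * m))
        = 2 * π * (Real.sin (r / Real.sqrt 2) ^ (2 * m) / r ^ (2 * m)) := by
    intro r hr
    rw [hmain r hr]
    have h1 : ((2*π):ℝ)^m ≠ 0 := by positivity
    have h2 : r ^ (2*m) ≠ 0 := pow_ne_zero _ hr.1.ne'
    field_simp
  refine ⟨?_, part2, ?_⟩
  · intro r hr
    rw [hmain r hr]
    have hX : ((2*π):ℝ)^m * Real.sin (r / Real.sqrt 2) ^ (2*m) ≠ 0 :=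
      mul_ne_zero (by positivity) (pow_ne_zero _ (hsin r hr).ne')
    rw [show 2*π*(2*π)^m * Real.sin (r / Real.sqrt 2)^(2*m)
        = 2*π*((2*π)^m * Real.sin (r / Real.sqrt 2)^(2*m)) by ring,
      mul_div_assoc, div_self hX, mul_one]
  · intro a ha b hb hab
    simp only
    rw [part2 a ha, part2 b hb]
    have key : Real.sin (b / Real.sqrt 2) / b < Real.sin (a / Real.sqrt 2) / a := by
      have hlt := sin_div_lt (α := a / Real.sqrt 2) (β := b / Real.sqrt 2)
        (div_pos ha.1 sqrt_two_pos) ((div_lt_div_iff_of_pos_right sqrt_two_pos).2 hab)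
        (div_sqrt2_le hb.2)
      have hAeq : Real.sin (a / Real.sqrt 2) / a
          = (Real.sin (a / Real.sqrt 2) / (a / Real.sqrt 2)) / Real.sqrt 2 := by
        rw [div_div, div_mul_cancel₀ _ sqrt_two_pos.ne']
      have hBeq : Real.sin (b / Real.sqrt 2) / b
          = (Real.sin (b / Real.sqrt 2) / (b / Real.sqrt 2)) / Real.sqrt 2 := by
        rw [div_div, div_mul_cancel₀ _ sqrt_two_pos.ne']
      rw [hAeq, hBeq]
      exact (div_lt_div_iff_of_pos_right sqrt_two_pos).2 hlt
    have hBpos : 0 < Real.sin (b / Real.sqrt 2) / b := div_pos (hsin b hb) (ha.1.trans hab)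
    have hpow : (Real.sin (b / Real.sqrt 2) / b)^(2*m)
        < (Real.sin (a / Real.sqrt 2) / a)^(2*m) :=
      pow_lt_pow_left₀ key hBpos.le (by omega)
    rw [← div_pow, ← div_pow]
    exact mul_lt_mul_of_pos_left hpow (by positivity)
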